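/- If a word w is such that some power w^k (with k ≥ 2) is a palindrome, then w itself is a palindrome. -/

import Mathlib

lemma flatten_rep_comm {α : Type*} (x : List α) (n : ℕ) :
    (List.replicate n x).flatten ++ x = x ++ (List.replicate n x).flatten := by
  induction n with
  | zero => simp
  | succ m ih =>
    rw [List.replicate_succ, List.flatten_cons, List.append_assoc, ih, ← List.append_assoc]

lemma rev_flatten_rep {α : Type*} (w : List α) (k : ℕ) :
    (List.replicate k w).flatten.reverse = (List.replicate k w.reverse).flatten := by
  induction k with
  | zero => simp
  | succ n ih =>
    rw [List.replicate_succ, List.flatten_cons, List.reverse_append, ih,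
      flatten_rep_comm, ← List.flatten_cons, ← List.replicate_succ]

/-- If some power `w^k` (with `k ≥ 2`) is a palindrome, then `w` itself is a palindrome. -/
theorem stmt2 {α : Type*} (w : List α) (k : ℕ) (hk : 2 ≤ k)
    (hpal : (List.replicate k w).flatten.reverse = (List.replicate k w).flatten) :
    w.reverse = w := by
  have hpal' : (List.replicate k w).flatten.reverse = (List.replicate k w).flatten := hpal
  rw [rev_flatten_rep] at hpal'
  obtain ⟨m, rfl⟩ : ∃ m, k = m + 1 := ⟨k - 1, by omega⟩
  rw [List.replicate_succ, List.replicate_succ, List.flatten_cons, List.flatten_cons] at hpal'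
  have h := congrArg (List.take w.length) hpal'
  rwa [show w.length = w.reverse.length from List.length_reverse.symm, List.take_left,
    List.length_reverse, List.take_left] at h
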